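/- For every n ≥ 2, all x, y ∈ C_2^{n−1}, and every a ∈ {0,1}: K_n(xa, y0) + K_n(xa, y1) = K_{n−1}(x, y), where xa denotes the binary n-tuple obtained from x by appending a as the n-th coordinate. Equivalently, as 2^n × 2^n matrices, K_n · (I^{⊗(n−1)} ⊗ K_1) = K_{n−1} ⊗ K_1, where I is the 2×2 identity matrix and K_1 is the 2×2 matrix all of whose entries are 1/2. -/

import Mathlib

open Finset

attribute [local instance] Classical.propDecidable

/-- Stationary distribution of the binary Burnside process. -/
noncomputable def piDist (n : ℕ) (U : Finset ℕ) : ℝ :=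
  1 / ((n + 1) * (n.choose U.card))

/-- Binary Burnside transition matrix entry. -/
noncomputable def Kmat (n : ℕ) (x y : Finset ℕ) : ℝ :=
  (((2 * (n - (x ∪ y).card)).choose (n - (x ∪ y).card) : ℝ) *
      ((2 * ((y \ x).card)).choose ((y \ x).card)) *
      ((2 * ((x \ y).card)).choose ((x \ y).card)) *
      ((2 * ((x ∩ y).card)).choose ((x ∩ y).card))) /
    (4 ^ n * (((n - (x ∪ y).card) + (y \ x).card).choose (n - (x ∪ y).card)) *
      (((x \ y).card + (x ∩ y).card).choose ((x \ y).card)))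

/-- Action of K_n on functions. -/
noncomputable def Kop (n : ℕ) (f : Finset ℕ → ℝ) : Finset ℕ → ℝ :=
  fun x => ∑ y ∈ (Finset.Icc 1 n).powerset, Kmat n x y * f y

/-- s-step transition probabilities. -/
noncomputable def Kpow (n : ℕ) : ℕ → Finset ℕ → Finset ℕ → ℝ
  | 0 => fun x y => if x = y then 1 else 0
  | s + 1 => fun x y => ∑ z ∈ (Finset.Icc 1 n).powerset, Kmat n x z * Kpow n s z y

/-- Chi-square distance to stationarity after s steps, started at x. -/
noncomputable def chiSq (n s : ℕ) (x : Finset ℕ) : ℝ :=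
  ∑ y ∈ (Finset.Icc 1 n).powerset, (Kpow n s x y - piDist n y) ^ 2 / piDist n y

/-- Eigenvalues. -/
noncomputable def betaEV (k : ℕ) : ℝ := (((2 * k).choose k : ℝ)) ^ 2 / 16 ^ k

/-- The eigenvectors f_S of Diaconis–Lin–Ram. -/
noncomputable def fSvec (S : Finset ℕ) : Finset ℕ → ℝ :=
  fun U => (-1 : ℝ) ^ ((S ∩ U).card) * (S.card.choose ((S ∩ U).card))

/-- Inner product with respect to π. -/
noncomputable def innerPi (n : ℕ) (f g : Finset ℕ → ℝ) : ℝ :=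
  ∑ U ∈ (Finset.Icc 1 n).powerset, f U * g U * piDist n U

/-- The scalars T_{m,n}^{(ℓ)}(i). -/
noncomputable def Tcoef (n m ℓ i : ℕ) : ℝ :=
  ∑ j ∈ Finset.range (i + 1),
    if j ≤ ℓ then
      (-1 : ℝ) ^ (m + j) * ((2 * m + ℓ).choose (m + j)) * (i.choose j) *
        ((n - 2 * m - i).choose (ℓ - j))
    else 0

/-- The vector g_T^{m,i} associated to the column reading tableau. -/
noncomputable def gT (n m i : ℕ) : Finset ℕ → ℝ := fun U =>
  if (∀ r ∈ Finset.Icc 1 m, ((2 * r - 1 ∈ U) ↔ ¬(2 * r ∈ U))) ∧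
      (U ∩ Finset.Icc (2 * m + 1) n).card = i then
    (-1 : ℝ) ^ ((U ∩ (Finset.range m).image (fun r => 2 * r + 1)).card)
  else 0

/-- The vector f_T^{m,ℓ} associated to the column reading tableau. -/
noncomputable def fT (n m ℓ : ℕ) : Finset ℕ → ℝ :=
  fun U => ∑ i ∈ Finset.range (n - 2 * m + 1), Tcoef n m ℓ i * gT n m i U

/-- Action of the adjacent transposition s_t (switching t and t+1) on functions. -/
noncomputable def sOp (t : ℕ) (f : Finset ℕ → ℝ) : Finset ℕ → ℝ :=
  fun U => f (U.image (Equiv.swap t (t + 1)))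

/-- The factor s_t − 1/(t − 2r + 2) (r is the 1-indexed position in the second row). -/
noncomputable def tauFactor (r t : ℕ) (f : Finset ℕ → ℝ) : Finset ℕ → ℝ :=
  fun U => sOp t f U - ((t : ℝ) - 2 * r + 2)⁻¹ * f U

/-- Composition (s_{2r+k-1} − ⋯)⋯(s_{2r} − 1/2) of k successive factors. -/
noncomputable def tauComp (r : ℕ) : ℕ → (Finset ℕ → ℝ) → (Finset ℕ → ℝ)
  | 0 => id
  | k + 1 => fun f => tauFactor r (2 * r + k) (tauComp r k f)

/-- τ_Q^{(r)} τ_Q^{(r+1)} ⋯ for the remaining second-row entries. -/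
noncomputable def tauQAux : ℕ → List ℕ → (Finset ℕ → ℝ) → (Finset ℕ → ℝ)
  | _, [] => id
  | r, a :: rest => fun f => tauComp r (a - 2 * r) (tauQAux (r + 1) rest f)

/-- The operator τ_Q for a tableau Q encoded by its list of second-row entries. -/
noncomputable def tauQ (Q : List ℕ) : (Finset ℕ → ℝ) → (Finset ℕ → ℝ) := tauQAux 1 Q

/-- A standard Young tableau of shape (n − Q.length, Q.length), encoded by the strictly
increasing list of second-row entries, each entry a_r satisfying 2r ≤ a_r ≤ n. -/
def IsSYT (n : ℕ) (Q : List ℕ) : Prop :=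
  Q.Chain' (· < ·) ∧ (∀ x ∈ Q, x ≤ n) ∧ ∀ r < Q.length, 2 * (r + 1) ≤ Q.getD r 0

/-- The eigenvectors f_Q^{m,ℓ} (here m = Q.length). -/
noncomputable def fQvec (n : ℕ) (Q : List ℕ) (ℓ : ℕ) : Finset ℕ → ℝ :=
  tauQ Q (fT n Q.length ℓ)

/-- The orthogonal vectors g_Q^{m,i} (here m = Q.length). -/
noncomputable def gQvec (n : ℕ) (Q : List ℕ) (i : ℕ) : Finset ℕ → ℝ :=
  tauQ Q (gT n Q.length i)

/-- The constant γ_Q. -/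
noncomputable def gammaQ (Q : List ℕ) : ℝ :=
  ∏ r ∈ Finset.range Q.length, ∏ c ∈ Finset.Icc 2 (Q.getD r 0 - 2 * (r + 1) + 1),
    ((c : ℝ) ^ 2 - 1) / (c : ℝ) ^ 2

/-- The Murphy (Jucys–Murphy) operator M_r acting on functions. -/
noncomputable def murphy (r : ℕ) (f : Finset ℕ → ℝ) : Finset ℕ → ℝ :=
  fun U => ∑ i ∈ Finset.Icc 1 (r - 1), f (U.image (Equiv.swap i r))

/-- The state space as a finite type. -/
noncomputable def transpEndo (n a b : ℕ) :
    Module.End ℝ ((↥((Finset.Icc 1 n).powerset)) → ℝ) where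
  toFun f U := f (if h : U.1.image (Equiv.swap a b) ∈ (Finset.Icc 1 n).powerset
    then ⟨U.1.image (Equiv.swap a b), h⟩ else U)
  map_add' f g := rfl
  map_smul' c f := rfl

noncomputable def murphyEndo (n r : ℕ) :
    Module.End ℝ ((↥((Finset.Icc 1 n).powerset)) → ℝ) :=
  ∑ i ∈ Finset.Icc 1 (r - 1), transpEndo n i r

noncomputable def KEndo (n : ℕ) :
    Module.End ℝ ((↥((Finset.Icc 1 n).powerset)) → ℝ) where
  toFun f x := ∑ y : ↥((Finset.Icc 1 n).powerset), Kmat n x.1 y.1 * f y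
  map_add' f g := by funext x; simp [mul_add, Finset.sum_add_distrib]
  map_smul' c f := by funext x; simp [Finset.mul_sum, mul_left_comm]



lemma cb_succ (a : ℕ) : (a+1) * ((2*(a+1)).choose (a+1)) = 2*(2*a+1) * ((2*a).choose a) := by
  simpa [Nat.centralBinom] using Nat.succ_mul_centralBinom_succ a

lemma keyR (a b : ℕ) :
    (((2*(a+1)).choose (a+1) : ℝ) * ((2*b).choose b)) / ((a+1+b).choose (a+1))
    + (((2*a).choose a : ℝ) * ((2*(b+1)).choose (b+1))) / ((a+(b+1)).choose a)
    = 4 * ((((2*a).choose a : ℝ) * ((2*b).choose b)) / ((a+b).choose a)) := by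
  have h1 : ((a:ℝ)+1) * ((2*(a+1)).choose (a+1)) = 2*(2*a+1) * ((2*a).choose a) := by
    exact_mod_cast congrArg (Nat.cast (R := ℝ)) (cb_succ a)
  have h2 : ((b:ℝ)+1) * ((2*(b+1)).choose (b+1)) = 2*(2*b+1) * ((2*b).choose b) := by
    exact_mod_cast congrArg (Nat.cast (R := ℝ)) (cb_succ b)
  have h3 : ((a:ℝ)+1+b) * ((a+b).choose a) = ((a+1+b).choose (a+1)) * (a+1) := by
    have := Nat.add_one_mul_choose_eq (a+b) a
    rw [show a+b+1 = a+1+b from by omega] at this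
    exact_mod_cast congrArg (Nat.cast (R := ℝ)) this
  have h4' : (a+b+1) * ((a+b).choose b) = ((a+b+1).choose (b+1)) * (b+1) := by
    have := Nat.add_one_mul_choose_eq (a+b) b
    simpa only [Nat.succ_eq_add_one] using this
  have hsymm : (a+b).choose b = (a+b).choose a := by
    rw [← Nat.choose_symm (Nat.le_add_right a b)]; congr 1; omega
  have hsymm2 : (a+b+1).choose (b+1) = (a+(b+1)).choose a := by
    rw [show a+(b+1) = a+b+1 from by omega,
      ← Nat.choose_symm (by omega : b+1 ≤ a+b+1)]
    congr 1; omega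
  rw [hsymm, hsymm2] at h4'
  have h4 : ((a:ℝ)+b+1) * ((a+b).choose a) = ((a+(b+1)).choose a) * (b+1) := by
    exact_mod_cast congrArg (Nat.cast (R := ℝ)) h4'
  have d1 : (((a+1+b).choose (a+1) : ℝ)) ≠ 0 := by
    exact_mod_cast (Nat.choose_pos (by omega)).ne'
  have d2 : (((a+(b+1)).choose a : ℝ)) ≠ 0 := by
    exact_mod_cast (Nat.choose_pos (by omega)).ne'
  have dD : (((a+b).choose a : ℝ)) ≠ 0 := by
    exact_mod_cast (Nat.choose_pos (by omega)).ne'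
  have dM : ((a:ℝ)+b+1) * ((a+b).choose a) ≠ 0 := mul_ne_zero (by positivity) dD
  have t1 : (((2*(a+1)).choose (a+1) : ℝ) * ((2*b).choose b)) / ((a+1+b).choose (a+1))
      = 2*(2*a+1) * (((2*a).choose a : ℝ) * ((2*b).choose b)) / (((a:ℝ)+b+1) * ((a+b).choose a)) := by
    rw [div_eq_div_iff d1 dM]
    linear_combination (((2*b).choose b : ℝ) * ((a+1+b).choose (a+1))) * h1
      + (((2*(a+1)).choose (a+1) : ℝ) * ((2*b).choose b)) * h3
  have t2 : (((2*a).choose a : ℝ) * ((2*(b+1)).choose (b+1))) / ((a+(b+1)).choose a)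
      = 2*(2*b+1) * (((2*a).choose a : ℝ) * ((2*b).choose b)) / (((a:ℝ)+b+1) * ((a+b).choose a)) := by
    rw [div_eq_div_iff d2 dM]
    linear_combination (((2*a).choose a : ℝ) * ((a+(b+1)).choose a)) * h2
      + (((2*a).choose a : ℝ) * ((2*(b+1)).choose (b+1))) * h4
  rw [t1, t2, ← add_div, mul_div_assoc', div_eq_div_iff dM dD]
  ring

lemma lumpA (m a b c d : ℕ) :
    (((2*(a+1)).choose (a+1) : ℝ) * ((2*b).choose b) * ((2*c).choose c) * ((2*d).choose d)) /
      (4 ^ (m+1) * ((a+1+b).choose (a+1)) * ((c+d).choose c))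
    + (((2*a).choose a : ℝ) * ((2*(b+1)).choose (b+1)) * ((2*c).choose c) * ((2*d).choose d)) /
      (4 ^ (m+1) * ((a+(b+1)).choose a) * ((c+d).choose c))
    = (((2*a).choose a : ℝ) * ((2*b).choose b) * ((2*c).choose c) * ((2*d).choose d)) /
      (4 ^ m * ((a+b).choose a) * ((c+d).choose c)) := by
  have hk := keyR a b
  rw [pow_succ]
  calc (((2*(a+1)).choose (a+1) : ℝ) * ((2*b).choose b) * ((2*c).choose c) * ((2*d).choose d)) /
      ((4:ℝ) ^ m * 4 * ((a+1+b).choose (a+1)) * ((c+d).choose c))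
    + (((2*a).choose a : ℝ) * ((2*(b+1)).choose (b+1)) * ((2*c).choose c) * ((2*d).choose d)) /
      ((4:ℝ) ^ m * 4 * ((a+(b+1)).choose a) * ((c+d).choose c))
      = ((((2*(a+1)).choose (a+1) : ℝ) * ((2*b).choose b)) / ((a+1+b).choose (a+1))
        + (((2*a).choose a : ℝ) * ((2*(b+1)).choose (b+1))) / ((a+(b+1)).choose a))
        * (((2*c).choose c : ℝ) * ((2*d).choose d) / ((4:ℝ)^m * 4 * ((c+d).choose c))) := by
        ring
    _ = (4 * ((((2*a).choose a : ℝ) * ((2*b).choose b)) / ((a+b).choose a)))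
        * (((2*c).choose c : ℝ) * ((2*d).choose d) / ((4:ℝ)^m * 4 * ((c+d).choose c))) := by
        rw [hk]
    _ = (((2*a).choose a : ℝ) * ((2*b).choose b) * ((2*c).choose c) * ((2*d).choose d)) /
      (4 ^ m * ((a+b).choose a) * ((c+d).choose c)) := by ring

lemma lumpB (m a b c d : ℕ) :
    (((2*a).choose a : ℝ) * ((2*b).choose b) * ((2*(c+1)).choose (c+1)) * ((2*d).choose d)) /
      (4 ^ (m+1) * ((a+b).choose a) * ((c+1+d).choose (c+1)))
    + (((2*a).choose a : ℝ) * ((2*b).choose b) * ((2*c).choose c) * ((2*(d+1)).choose (d+1))) /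
      (4 ^ (m+1) * ((a+b).choose a) * ((c+(d+1)).choose c))
    = (((2*a).choose a : ℝ) * ((2*b).choose b) * ((2*c).choose c) * ((2*d).choose d)) /
      (4 ^ m * ((a+b).choose a) * ((c+d).choose c)) := by
  have hk := keyR c d
  rw [pow_succ]
  calc (((2*a).choose a : ℝ) * ((2*b).choose b) * ((2*(c+1)).choose (c+1)) * ((2*d).choose d)) /
      ((4:ℝ) ^ m * 4 * ((a+b).choose a) * ((c+1+d).choose (c+1)))
    + (((2*a).choose a : ℝ) * ((2*b).choose b) * ((2*c).choose c) * ((2*(d+1)).choose (d+1))) /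
      ((4:ℝ) ^ m * 4 * ((a+b).choose a) * ((c+(d+1)).choose c))
      = ((((2*(c+1)).choose (c+1) : ℝ) * ((2*d).choose d)) / ((c+1+d).choose (c+1))
        + (((2*c).choose c : ℝ) * ((2*(d+1)).choose (d+1))) / ((c+(d+1)).choose c))
        * (((2*a).choose a : ℝ) * ((2*b).choose b) / ((4:ℝ)^m * 4 * ((a+b).choose a))) := by
        ring
    _ = (4 * ((((2*c).choose c : ℝ) * ((2*d).choose d)) / ((c+d).choose c)))
        * (((2*a).choose a : ℝ) * ((2*b).choose b) / ((4:ℝ)^m * 4 * ((a+b).choose a))) := by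
        rw [hk]
    _ = (((2*a).choose a : ℝ) * ((2*b).choose b) * ((2*c).choose c) * ((2*d).choose d)) /
      (4 ^ m * ((a+b).choose a) * ((c+d).choose c)) := by ring


/-- lumping over the final coordinate:
K_n(xa, y0) + K_n(xa, y1) = K_{n−1}(x, y) for a ∈ {0,1}. -/
theorem Kmat_lump_last_coordinate (n : ℕ) (hn : 2 ≤ n) (x y : Finset ℕ)
    (hx : x ⊆ Finset.Icc 1 (n - 1)) (hy : y ⊆ Finset.Icc 1 (n - 1)) :
    (Kmat n x y + Kmat n x (insert n y) = Kmat (n - 1) x y) ∧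
    (Kmat n (insert n x) y + Kmat n (insert n x) (insert n y) = Kmat (n - 1) x y) := by
  obtain ⟨m, rfl⟩ : ∃ m, n = m + 1 := ⟨n - 1, by omega⟩
  simp only [Nat.add_sub_cancel] at hx hy ⊢
  have hnx : m + 1 ∉ x := by
    intro h; have := Finset.mem_Icc.mp (hx h); omega
  have hny : m + 1 ∉ y := by
    intro h; have := Finset.mem_Icc.mp (hy h); omega
  have hxy : m + 1 ∉ x ∪ y := by simp [hnx, hny]
  have hyx' : m + 1 ∉ y \ x := by simp [hny]
  have hxy' : m + 1 ∉ x \ y := by simp [hnx]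
  have hixy : m + 1 ∉ x ∩ y := by simp [hnx]
  have hu : (x ∪ y).card ≤ m := by
    have := Finset.card_le_card (Finset.union_subset hx hy)
    simpa [Nat.card_Icc] using this
  have s1 : x ∪ insert (m+1) y = insert (m+1) (x ∪ y) := by
    ext i; by_cases hi : i = m + 1 <;> simp [hi, hnx, hny]
  have s2 : insert (m+1) y \ x = insert (m+1) (y \ x) := by
    ext i; by_cases hi : i = m + 1 <;> simp [hi, hnx, hny]
  have s3 : x \ insert (m+1) y = x \ y := by
    ext i; by_cases hi : i = m + 1 <;> simp [hi, hnx, hny]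
  have s4 : x ∩ insert (m+1) y = x ∩ y := by
    ext i; by_cases hi : i = m + 1 <;> simp [hi, hnx, hny]
  have s5 : insert (m+1) x ∪ y = insert (m+1) (x ∪ y) := by
    ext i; by_cases hi : i = m + 1 <;> simp [hi, hnx, hny]
  have s6 : y \ insert (m+1) x = y \ x := by
    ext i; by_cases hi : i = m + 1 <;> simp [hi, hnx, hny]
  have s7 : insert (m+1) x \ y = insert (m+1) (x \ y) := by
    ext i; by_cases hi : i = m + 1 <;> simp [hi, hnx, hny]
  have s8 : insert (m+1) x ∩ y = x ∩ y := by
    ext i; by_cases hi : i = m + 1 <;> simp [hi, hnx, hny]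
  have s9 : insert (m+1) x ∪ insert (m+1) y = insert (m+1) (x ∪ y) := by
    ext i; by_cases hi : i = m + 1 <;> simp [hi, hnx, hny]
  have s10 : insert (m+1) y \ insert (m+1) x = y \ x := by
    ext i; by_cases hi : i = m + 1 <;> simp [hi, hnx, hny]
  have s11 : insert (m+1) x \ insert (m+1) y = x \ y := by
    ext i; by_cases hi : i = m + 1 <;> simp [hi, hnx, hny]
  have s12 : insert (m+1) x ∩ insert (m+1) y = insert (m+1) (x ∩ y) := by
    ext i; by_cases hi : i = m + 1 <;> simp [hi, hnx, hny]
  constructor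
  · simp only [Kmat, s1, s2, s3, s4, Finset.card_insert_of_notMem hxy,
      Finset.card_insert_of_notMem hyx']
    rw [show m + 1 - ((x ∪ y).card + 1) = m - (x ∪ y).card from by omega,
      show m + 1 - (x ∪ y).card = (m - (x ∪ y).card) + 1 from by omega]
    exact lumpA m (m - (x ∪ y).card) (y \ x).card (x \ y).card (x ∩ y).card
  · simp only [Kmat, s5, s6, s7, s8, s9, s10, s11, s12,
      Finset.card_insert_of_notMem hxy, Finset.card_insert_of_notMem hxy',
      Finset.card_insert_of_notMem hixy]
    rw [show m + 1 - ((x ∪ y).card + 1) = m - (x ∪ y).card from by omega]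
    exact lumpB m (m - (x ∪ y).card) (y \ x).card (x \ y).card (x ∩ y).card
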